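/- Let C be a dissipative operator and A a skew-symmetric operator on a real Hilbert space H with C ⊆ A* and −A ⊆ A*, and suppose Cx = −Ax for all x ∈ D(C) ∩ D(A). Define \tilde{C} on D(C) + D(A) by \tilde{C}(u + v) = Cu − Av for u ∈ D(C), v ∈ D(A). Then \tilde{C} is well-defined and dissipative: (\tilde{C}w, w) ≤ 0 for all w ∈ D(\tilde{C}). -/

import Mathlib

/-- If `C` is dissipative, `A` is skew-symmetric with dense domain, `C ⊆ A*`, and
`C = −A` on `D(C) ∩ D(A)`, then the operator `C̃(u + v) = Cu − Av` on `D(C) + D(A)`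
is well-defined and dissipative. -/
theorem extension_well_defined_and_dissipative {H : Type*} [NormedAddCommGroup H]
    [InnerProductSpace ℝ H] [CompleteSpace H]
    (C A : H →ₗ.[ℝ] H)
    (hdense : Dense (A.domain : Set H))
    (hdiss : ∀ u : C.domain, (inner ℝ (C u) (u : H) : ℝ) ≤ 0)
    (hCA : C ≤ A.adjoint)
    (hskew : ∀ v w : A.domain, (inner ℝ (A v) (w : H) : ℝ) = - inner ℝ (v : H) (A w))
    (hagree : ∀ (u : C.domain) (v : A.domain), (u : H) = (v : H) → C u = - A v) :
    (∀ (u₁ u₂ : C.domain) (v₁ v₂ : A.domain),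
        (u₁ : H) + (v₁ : H) = (u₂ : H) + (v₂ : H) → C u₁ - A v₁ = C u₂ - A v₂) ∧
    (∀ (u : C.domain) (v : A.domain), (inner ℝ (C u - A v) ((u : H) + (v : H)) : ℝ) ≤ 0) := by
  constructor
  · intro u₁ u₂ v₁ v₂ h
    have h' : ((u₁ - u₂ : C.domain) : H) = ((v₂ - v₁ : A.domain) : H) := by
      push_cast
      linear_combination (norm := abel) h
    have := hagree (u₁ - u₂) (v₂ - v₁) h'
    rw [C.map_sub, A.map_sub] at this
    linear_combination (norm := abel) this
  · intro u v
    -- cross term: ⟪C u, v⟫ = ⟪u, A v⟫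
    obtain ⟨u', hu'1, hu'2⟩ := LinearPMap.exists_of_le hCA u
    have hform := A.adjoint_isFormalAdjoint hdense u' v
    have hcross : (inner ℝ (C u) (v : H) : ℝ) = inner ℝ (u : H) (A v) := by
      rw [hu'2, hu'1, hform]
    have hAvv : (inner ℝ (A v) (v : H) : ℝ) = 0 := by
      have h1 := hskew v v
      have h2 := real_inner_comm (A v : H) (v : H)
      linarith
    have hAvu : (inner ℝ (A v) (u : H) : ℝ) = inner ℝ (u : H) (A v) :=
      real_inner_comm _ _
    have expand : (inner ℝ (C u - A v) ((u : H) + (v : H)) : ℝ) =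
        inner ℝ (C u) (u : H) + inner ℝ (C u) (v : H)
          - inner ℝ (A v) (u : H) - inner ℝ (A v) (v : H) := by
      rw [inner_sub_left, inner_add_right, inner_add_right]; ring
    rw [expand, hcross, hAvu, hAvv]
    have := hdiss u
    linarith
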